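/- For every set F ⊆ ℝ^d, the generalized upper box dimension of F is zero if and only if the quasi-Assouad dimension of F is zero: \overline{dim}_GB F = 0 ⟺ dim_qA F = 0. -/

import Mathlib

open Filter Metric Set Topology Bornology ENNReal

noncomputable section

variable {X : Type*} [PseudoMetricSpace X]

/-- `coveringNumber r E` is the smallest number of closed balls of radius `r`
needed to cover `E` (with value `⊤` if no finite cover exists). -/
def coveringNumber (r : ℝ) (E : Set X) : ℕ∞ :=
  sInf {n : ℕ∞ | ∃ t : Finset X, (E ⊆ ⋃ x ∈ t, closedBall x r) ∧ (t.card : ℕ∞) = n}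

/-- The Assouad spectrum `dim_A^θ F`. -/
def assouadSpectrum (θ : ℝ) (F : Set X) : ℝ :=
  sInf {s : ℝ | 0 ≤ s ∧ ∃ C > (0 : ℝ), ∀ R : ℝ, 0 < R → R < 1 → ∀ x ∈ F,
    (coveringNumber (R ^ (1 / θ)) (closedBall x R ∩ F) : ℝ≥0∞)
      ≤ ENNReal.ofReal (C * (R / R ^ (1 / θ)) ^ s)}

/-- The upper spectrum `\overline{dim}_A^θ F`. -/
def upperSpectrum (θ : ℝ) (F : Set X) : ℝ :=
  sInf {s : ℝ | 0 ≤ s ∧ ∃ C > (0 : ℝ), ∀ r R : ℝ, 0 < r → r ≤ R ^ (1 / θ) →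
    R ^ (1 / θ) < R → R < 1 → 0 < R → ∀ x ∈ F,
    (coveringNumber r (closedBall x R ∩ F) : ℝ≥0∞) ≤ ENNReal.ofReal (C * (R / r) ^ s)}

/-- The generalized upper box dimension `\overline{dim}_{GB} F := limsup_{θ → 0⁺} dim_A^θ F`. -/
def genUpperBoxDim (F : Set X) : ℝ :=
  limsup (fun θ : ℝ => assouadSpectrum θ F) (𝓝[>] (0 : ℝ))

/-- The quasi-Assouad dimension `dim_{qA} F := lim_{θ → 1⁻} \overline{dim}_A^θ F`
(the limit exists by monotonicity, hence equals the limsup). -/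
def quasiAssouadDim (F : Set X) : ℝ :=
  limsup (fun θ : ℝ => upperSpectrum θ F) (𝓝[<] (1 : ℝ))

/-- The upper box dimension `\overline{dim}_B F := limsup_{δ → 0⁺} log N_δ(F) / (- log δ)`. -/
def upperBoxDim (F : Set X) : ℝ :=
  limsup (fun δ : ℝ => Real.log ((coveringNumber δ F).toNat : ℝ) / (- Real.log δ))
    (𝓝[>] (0 : ℝ))

/-- The Assouad dimension `dim_A F`. -/
def assouadDim (F : Set X) : ℝ :=
  sInf {s : ℝ | 0 ≤ s ∧ ∃ C > (0 : ℝ), ∃ ρ > (0 : ℝ), ∀ r R : ℝ, 0 < r → r < R → R < ρ →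
    ∀ x ∈ F, (coveringNumber r (closedBall x R ∩ F) : ℝ≥0∞) ≤ ENNReal.ofReal (C * (R / r) ^ s)}

/-- The packing pre-measure at scale `δ`: the supremum of `∑ |B_i|^s` over at most countable
collections of disjoint closed balls of radii at most `δ` (and positive) with centres in `F`,
where `|B_i| = 2 r_i` is the diameter. -/
def packingPre (s δ : ℝ) (F : Set X) : ℝ≥0∞ :=
  ⨆ (D : Set (X × ℝ)) (_ : D.Countable)
    (_ : ∀ p ∈ D, p.1 ∈ F ∧ 0 < p.2 ∧ p.2 ≤ δ)
    (_ : D.Pairwise fun p q => Disjoint (closedBall p.1 p.2) (closedBall q.1 q.2)),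
    ∑' p : D, ENNReal.ofReal ((2 * (p : X × ℝ).2) ^ s)

/-- `𝒫₀^s(F) := lim_{δ → 0} 𝒫_δ^s(F)`; the limit exists by monotonicity and equals the inf. -/
def packingPre₀ (s : ℝ) (F : Set X) : ℝ≥0∞ :=
  ⨅ (δ : ℝ) (_ : 0 < δ), packingPre s δ F

/-- The packing (outer) measure `𝒫^s(F)`. -/
def packingMeasure (s : ℝ) (F : Set X) : ℝ≥0∞ :=
  ⨅ (G : ℕ → Set X) (_ : F ⊆ ⋃ i, G i), ∑' i, packingPre₀ s (G i)

/-- The packing dimension `dim_P F = inf {s ≥ 0 : 𝒫^s(F) = 0}`. -/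
def packingDim (F : Set X) : ℝ :=
  sInf {s : ℝ | 0 ≤ s ∧ packingMeasure s F = 0}


/-- real-valued covering predicate -/
def Cov (r c : ℝ) (E : Set X) : Prop :=
  ∃ t : Finset X, (E ⊆ ⋃ x ∈ t, closedBall x r) ∧ (t.card : ℝ) ≤ c

lemma Cov.mono_c {r c c' : ℝ} {E : Set X} (h : Cov r c E) (hc : c ≤ c') : Cov r c' E := by
  obtain ⟨t, h1, h2⟩ := h; exact ⟨t, h1, h2.trans hc⟩

lemma Cov.mono_set {r c : ℝ} {E E' : Set X} (h : Cov r c E') (hE : E ⊆ E') : Cov r c E := by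
  obtain ⟨t, h1, h2⟩ := h; exact ⟨t, hE.trans h1, h2⟩

lemma Cov.mono_r {r r' c : ℝ} {E : Set X} (h : Cov r c E) (hr : r ≤ r') : Cov r' c E := by
  obtain ⟨t, h1, h2⟩ := h
  exact ⟨t, h1.trans (iUnion₂_mono fun z _ => closedBall_subset_closedBall hr), h2⟩

lemma Cov.coveringNumber_le {r c : ℝ} {E : Set X} (h : Cov r c E) :
    (coveringNumber r E : ℝ≥0∞) ≤ ENNReal.ofReal c := by
  obtain ⟨t, h1, h2⟩ := h
  have : coveringNumber r E ≤ (t.card : ℕ∞) := sInf_le ⟨t, h1, rfl⟩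
  calc (coveringNumber r E : ℝ≥0∞) ≤ ((t.card : ℕ∞) : ℝ≥0∞) := ENat.toENNReal_le.2 this
    _ = (t.card : ℝ≥0∞) := ENat.toENNReal_coe _
    _ = ENNReal.ofReal (t.card : ℝ) := (ENNReal.ofReal_natCast _).symm
    _ ≤ ENNReal.ofReal c := ENNReal.ofReal_le_ofReal h2

lemma cov_of_coveringNumber_le {r c : ℝ} {E : Set X} (hc : 0 ≤ c)
    (h : (coveringNumber r E : ℝ≥0∞) ≤ ENNReal.ofReal c) : Cov r c E := by
  classical
  set W' : Set ℕ := {k : ℕ | ∃ t : Finset X, (E ⊆ ⋃ x ∈ t, closedBall x r) ∧ t.card = k} with hW'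
  have hne : W'.Nonempty := by
    by_contra hn
    have : coveringNumber r E = ⊤ := by
      rw [_root_.coveringNumber, sInf_eq_top]
      rintro n ⟨t, ht, rfl⟩
      exact (hn ⟨t.card, t, ht, rfl⟩).elim
    rw [this] at h
    simp only [ENat.toENNReal_top, top_le_iff] at h
    exact ENNReal.ofReal_ne_top h
  obtain ⟨t₀, ht₀, hcard⟩ := Nat.sInf_mem hne
  refine ⟨t₀, ht₀, ?_⟩
  have hlb : ((sInf W' : ℕ) : ℕ∞) ≤ coveringNumber r E := by
    rw [_root_.coveringNumber]
    apply le_sInf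
    rintro n ⟨t, ht, rfl⟩
    have hm : t.card ∈ W' := ⟨t, ht, rfl⟩
    exact_mod_cast Nat.sInf_le hm
  have h2 : ENNReal.ofReal ((sInf W' : ℕ) : ℝ) ≤ ENNReal.ofReal c := by
    rw [ENNReal.ofReal_natCast]
    exact le_trans (by rw [← ENat.toENNReal_coe]; exact ENat.toENNReal_le.2 hlb) h
  rw [hcard]
  exact (ENNReal.ofReal_le_ofReal_iff hc).1 h2

/-- Recentering: from a cover of `E` by `r`-balls, get a cover by `2r`-balls centred in `E`. -/
lemma Cov.recenter {r c : ℝ} {E : Set X} (h : Cov r c E) :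
    ∃ t : Finset X, (↑t : Set X) ⊆ E ∧ (E ⊆ ⋃ x ∈ t, closedBall x (2 * r)) ∧
      (t.card : ℝ) ≤ c := by
  classical
  obtain ⟨t₀, hcov, hcard⟩ := h
  set g : X → X := fun z => if h : (closedBall z r ∩ E).Nonempty then h.choose else z with hg
  refine ⟨(t₀.filter (fun z => (closedBall z r ∩ E).Nonempty)).image g, ?_, ?_, ?_⟩
  · intro w hw
    simp only [Finset.coe_image, Set.mem_image, Finset.mem_coe, Finset.mem_filter] at hw
    obtain ⟨z, ⟨_, hz⟩, rfl⟩ := hw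
    simp only [hg, dif_pos hz]
    exact hz.choose_spec.2
  · intro p hp
    obtain ⟨z, hz, hpz⟩ := by
      have := hcov hp
      simpa only [Set.mem_iUnion, exists_prop] using this
    have hzne : (closedBall z r ∩ E).Nonempty := ⟨p, hpz, hp⟩
    simp only [Set.mem_iUnion, exists_prop]
    refine ⟨g z, Finset.mem_image_of_mem g (Finset.mem_filter.2 ⟨hz, hzne⟩), ?_⟩
    have hgz : g z ∈ closedBall z r ∩ E := by
      simp only [hg, dif_pos hzne]; exact hzne.choose_spec
    have h1 : dist p z ≤ r := mem_closedBall.1 hpz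
    have h2 : dist z (g z) ≤ r := by
      have := mem_closedBall.1 hgz.1; rwa [dist_comm]
    calc dist p (g z) ≤ dist p z + dist z (g z) := dist_triangle _ _ _
      _ ≤ 2 * r := by linarith
  · calc ((Finset.image g _).card : ℝ) ≤ _ := Nat.cast_le.2 (Finset.card_image_le)
      _ ≤ (t₀.card : ℝ) := Nat.cast_le.2 (Finset.card_filter_le _ _)
      _ ≤ c := hcard

/-- Combining covers: if `E ⊆ ⋃_{z∈t} B(z,ρ)` and each `B(z,ρ) ∩ F` is covered, so is `E ∩ F`. -/
lemma cov_of_pieces {r ρ c₁ c₂ : ℝ} {F E : Set X} (hc₂ : 0 ≤ c₂) (t : Finset X)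
    (hcov : E ⊆ ⋃ z ∈ t, closedBall z ρ) (hcard : (t.card : ℝ) ≤ c₁)
    (hp : ∀ z ∈ t, Cov r c₂ (closedBall z ρ ∩ F)) :
    Cov r (c₁ * c₂) (E ∩ F) := by
  classical
  choose u hu1 hu2 using hp
  refine ⟨t.attach.biUnion (fun z => u z.1 z.2), ?_, ?_⟩
  · rintro p ⟨hpE, hpF⟩
    obtain ⟨z, hz, hpz⟩ := by
      have := hcov hpE
      simpa only [Set.mem_iUnion, exists_prop] using this
    have := hu1 z hz ⟨hpz, hpF⟩
    simp only [Set.mem_iUnion, exists_prop] at this ⊢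
    obtain ⟨w, hw, hpw⟩ := this
    exact ⟨w, Finset.mem_biUnion.2 ⟨⟨z, hz⟩, Finset.mem_attach _ _, hw⟩, hpw⟩
  · calc ((t.attach.biUnion (fun z => u z.1 z.2)).card : ℝ)
        ≤ ((∑ z ∈ t.attach, (u z.1 z.2).card : ℕ) : ℝ) := Nat.cast_le.2 (Finset.card_biUnion_le)
      _ ≤ ∑ z ∈ t.attach, c₂ := by
          rw [Nat.cast_sum]
          exact Finset.sum_le_sum (fun z _ => hu2 z.1 z.2)
      _ = (t.card : ℝ) * c₂ := by
          rw [Finset.sum_const, Finset.card_attach, nsmul_eq_mul]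
      _ ≤ c₁ * c₂ := mul_le_mul_of_nonneg_right hcard hc₂

section Euclid

variable {d : ℕ}

local notation "Y" => EuclideanSpace ℝ (Fin d)

open MeasureTheory

/-- Volume bound on separated sets in a ball. -/
lemma sep_card_le {x : Y} {R r : ℝ} (hr : 0 < r) (hrR : r ≤ R) (t : Finset Y)
    (ht : (↑t : Set Y) ⊆ closedBall x R)
    (hsep : (↑t : Set Y).Pairwise (fun a b => r < dist a b)) :
    (t.card : ℝ) ≤ (3 * R / r) ^ d := by
  classical
  have hR : 0 < R := hr.trans_le hrR
  set μ : Measure Y := volume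
  set U : ℝ≥0∞ := μ (ball 0 1) with hU
  have hU0 : U ≠ 0 := (measure_ball_pos μ 0 one_pos).ne'
  have hUtop : U ≠ ⊤ := (measure_ball_lt_top).ne
  have hballs : ∀ z : Y, ∀ ρ : ℝ, 0 ≤ ρ →
      μ (closedBall z ρ) = ENNReal.ofReal (ρ ^ d) * U := by
    intro z ρ hρ
    rw [hU, Measure.addHaar_closedBall μ z hρ, finrank_euclideanSpace_fin]
  have hdisj : (↑t : Set Y).PairwiseDisjoint (fun z => closedBall z (r/2)) := by
    intro a ha b hb hab
    exact closedBall_disjoint_closedBall (by linarith [hsep ha hb hab])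
  have hsum : μ (⋃ z ∈ t, closedBall z (r/2)) = ∑ z ∈ t, μ (closedBall z (r/2)) :=
    measure_biUnion_finset hdisj (fun z _ => measurableSet_closedBall)
  have hsub : (⋃ z ∈ t, closedBall z (r/2)) ⊆ closedBall x (R + r/2) := by
    intro p hp
    simp only [Set.mem_iUnion, exists_prop] at hp
    obtain ⟨z, hz, hpz⟩ := hp
    have h1 : dist z x ≤ R := mem_closedBall.1 (ht hz)
    have h2 : dist p z ≤ r/2 := mem_closedBall.1 hpz
    exact mem_closedBall.2 ((dist_triangle p z x).trans (by linarith))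
  have key : (t.card : ℝ≥0∞) * (ENNReal.ofReal ((r/2) ^ d) * U) ≤
      ENNReal.ofReal ((3*R/r) ^ d) * (ENNReal.ofReal ((r/2) ^ d) * U) := by
    have h1 : (t.card : ℝ≥0∞) * (ENNReal.ofReal ((r/2) ^ d) * U)
        = μ (⋃ z ∈ t, closedBall z (r/2)) := by
      rw [hsum]
      rw [Finset.sum_congr rfl (fun z _ => hballs z (r/2) (by linarith))]
      rw [Finset.sum_const, nsmul_eq_mul]
    have h2 : μ (⋃ z ∈ t, closedBall z (r/2)) ≤ ENNReal.ofReal ((R + r/2) ^ d) * U := by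
      rw [← hballs x (R + r/2) (by linarith)]
      exact measure_mono hsub
    have h3 : ENNReal.ofReal ((R + r/2) ^ d) * U ≤
        ENNReal.ofReal ((3*R/r) ^ d) * (ENNReal.ofReal ((r/2) ^ d) * U) := by
      rw [← mul_assoc, ← ENNReal.ofReal_mul (by positivity), ← mul_pow]
      have : (3*R/r) * (r/2) = 3*R/2 := by field_simp
      rw [this]
      refine mul_le_mul_left (ENNReal.ofReal_le_ofReal ?_) U
      exact pow_le_pow_left₀ (by linarith) (by linarith) d
    rw [h1]; exact h2.trans h3
  have hA0 : (ENNReal.ofReal ((r/2) ^ d) * U) ≠ 0 := by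
    apply mul_ne_zero _ hU0
    simp only [ne_eq, ENNReal.ofReal_eq_zero, not_le]
    positivity
  have hAtop : (ENNReal.ofReal ((r/2) ^ d) * U) ≠ ⊤ :=
    ENNReal.mul_ne_top ENNReal.ofReal_ne_top hUtop
  have := (ENNReal.mul_le_mul_iff_left hA0 hAtop).1 key
  rw [← ENNReal.ofReal_natCast] at this
  exact (ENNReal.ofReal_le_ofReal_iff (by positivity)).1 this

/-- Euclidean covering lemma: a bounded set can be covered by `(3R/r)^d` balls of radius `r`. -/
lemma euclid_cov {x : Y} {R r : ℝ} (hr : 0 < r) (hrR : r ≤ R) (E : Set Y)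
    (hE : E ⊆ closedBall x R) : Cov r ((3 * R / r) ^ d) E := by
  classical
  set S : Set ℕ := {k : ℕ | ∃ t : Finset Y, (↑t : Set Y) ⊆ E ∧
      (↑t : Set Y).Pairwise (fun a b => r < dist a b) ∧ t.card = k} with hS
  have hone : 0 ∈ S := ⟨∅, by simp, by simp, by simp⟩
  have hbdd : BddAbove S := by
    refine ⟨Nat.floor ((3*R/r)^d), ?_⟩
    rintro k ⟨t, ht, hsep, rfl⟩
    exact Nat.le_floor (sep_card_le hr hrR t (ht.trans hE) hsep)
  obtain ⟨t, htE, hsep, hcard⟩ := Nat.sSup_mem ⟨0, hone⟩ hbdd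
  refine ⟨t, ?_, ?_⟩
  · intro p hp
    by_contra hcov
    simp only [Set.mem_iUnion, exists_prop, not_exists, not_and] at hcov
    have hfar : ∀ z ∈ t, r < dist p z := by
      intro z hz
      by_contra hle
      exact hcov z hz (mem_closedBall.2 (le_of_not_gt hle))
    have hpt : p ∉ t := fun hpt => by
      have := hfar p hpt
      simp at this; linarith
    have hnew : (t.card + 1) ∈ S := by
      refine ⟨insert p t, ?_, ?_, ?_⟩
      · intro w hw
        simp only [Finset.coe_insert, Set.mem_insert_iff] at hw
        rcases hw with rfl | hw
        · exact hp
        · exact htE hw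
      · intro a ha b hb hab
        simp only [Finset.coe_insert, Set.mem_insert_iff] at ha hb
        rcases ha with rfl | ha <;> rcases hb with rfl | hb
        · exact absurd rfl hab
        · exact hfar b hb
        · rw [dist_comm]; exact hfar a ha
        · exact hsep ha hb hab
      · rw [Finset.card_insert_of_notMem hpt]
    have := le_csSup hbdd hnew
    omega
  · exact sep_card_le hr hrR t (htE.trans hE) hsep

end Euclid

lemma one_le_rpow' {x s : ℝ} (hx : 1 ≤ x) (hs : 0 ≤ s) : 1 ≤ x ^ s := by
  calc (1:ℝ) = 1 ^ s := (Real.one_rpow s).symm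
    _ ≤ x ^ s := Real.rpow_le_rpow zero_le_one hx hs

section Chain

variable {F : Set X} {θ₀ s C : ℝ}

/-- One-shot covering when the target scale is above `ρ^(1/θ₀)`. -/
lemma chain_direct (hθ₀ : 0 < θ₀) (hs : 0 ≤ s) (hC : 1 ≤ C)
    (H : ∀ ρ : ℝ, 0 < ρ → ρ < 1 → ∀ y ∈ F,
      Cov (ρ ^ (1/θ₀)) (C * (ρ / ρ ^ (1/θ₀)) ^ s) (closedBall y ρ ∩ F))
    {ρ r : ℝ} (hρ : 0 < ρ) (hr : 0 < r) (hr1 : r < 1) (hρr : ρ ≤ r ^ θ₀) :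
    ∀ y ∈ F, Cov r (C * (1/r) ^ s) (closedBall y ρ ∩ F) := by
  intro y hy
  have hrt : 0 < r ^ θ₀ := Real.rpow_pos_of_pos hr _
  have hrt1 : r ^ θ₀ < 1 := Real.rpow_lt_one hr.le hr1 hθ₀
  have hkey : (r ^ θ₀) ^ (1/θ₀) = r := by
    rw [← Real.rpow_mul hr.le, mul_one_div_cancel (ne_of_gt hθ₀), Real.rpow_one]
  have h := H (r ^ θ₀) hrt hrt1 y hy
  rw [hkey] at h
  refine (h.mono_set ?_).mono_c ?_
  · exact Set.inter_subset_inter_left _ (closedBall_subset_closedBall hρr)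
  · apply mul_le_mul_of_nonneg_left _ (by linarith : (0:ℝ) ≤ C)
    apply Real.rpow_le_rpow (by positivity) _ hs
    gcongr


/-- The main chaining induction. -/
lemma chain (hθ₀ : 0 < θ₀) (hθ3 : θ₀ ≤ 1/3) (hs : 0 ≤ s) (hC : 1 ≤ C)
    (H : ∀ ρ : ℝ, 0 < ρ → ρ < 1 → ∀ y ∈ F,
      Cov (ρ ^ (1/θ₀)) (C * (ρ / ρ ^ (1/θ₀)) ^ s) (closedBall y ρ ∩ F)) :
    ∀ n : ℕ, ∀ ρ r : ℝ, 0 < ρ → ρ ≤ 1/2 → 0 < r → r ≤ ρ → ρ ^ ((2:ℝ)^n) ≤ r →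
    ∀ y ∈ F, Cov r (((2:ℝ)^s*C)^(n+1) * (ρ/r)^s * (1/r)^s) (closedBall y ρ ∩ F) := by
  have h2s : (1:ℝ) ≤ (2:ℝ)^s := one_le_rpow' one_le_two hs
  have hK : (1:ℝ) ≤ (2:ℝ)^s*C := le_trans (by norm_num) (mul_le_mul h2s hC zero_le_one (by linarith))
  have ha3 : (3:ℝ) ≤ 1/θ₀ := by
    rw [le_div_iff₀ hθ₀]; linarith
  -- the "direct case" bound fits under the inductive bound
  have hfits : ∀ n : ℕ, ∀ ρ r : ℝ, 0 < ρ → ρ ≤ 1/2 → 0 < r → r ≤ ρ →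
      C * (1/r) ^ s ≤ ((2:ℝ)^s*C)^(n+1) * (ρ/r)^s * (1/r)^s := by
    intro n ρ r hρ hρ2 hr hrρ
    have h1 : (1:ℝ) ≤ (ρ/r)^s := one_le_rpow' ((one_le_div hr).2 hrρ) hs
    have h2 : C ≤ ((2:ℝ)^s*C)^(n+1) := by
      calc C ≤ (2:ℝ)^s*C := le_mul_of_one_le_left (by linarith) h2s
        _ = ((2:ℝ)^s*C)^1 := (pow_one _).symm
        _ ≤ ((2:ℝ)^s*C)^(n+1) := pow_le_pow_right₀ hK (by omega)
    calc C * (1/r)^s ≤ (((2:ℝ)^s*C)^(n+1) * (ρ/r)^s) * (1/r)^s := by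
          apply mul_le_mul_of_nonneg_right _ (Real.rpow_nonneg (by positivity) s)
          calc C = C * 1 := (mul_one C).symm
            _ ≤ ((2:ℝ)^s*C)^(n+1) * (ρ/r)^s :=
              mul_le_mul h2 h1 zero_le_one (by positivity)
      _ = _ := by ring
  intro n
  induction n with
  | zero =>
    intro ρ r hρ hρ2 hr hrρ hguard y hy
    -- here the guard forces `ρ ≤ r`, so `ρ^(1/θ₀) ≤ r` and we use the direct bound
    have hρr : ρ ≤ r := by
      have : ρ ^ ((2:ℝ)^(0:ℕ)) = ρ := by norm_num
      rwa [this] at hguard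
    have hdir : ρ ≤ r ^ θ₀ := by
      calc ρ ≤ r := hρr
        _ = r ^ (1:ℝ) := (Real.rpow_one r).symm
        _ ≤ r ^ θ₀ := Real.rpow_le_rpow_of_exponent_ge hr (by linarith) (by linarith)
    exact ((chain_direct hθ₀ hs hC H hρ hr (by linarith) hdir y hy).mono_c
      (hfits 0 ρ r hρ hρ2 hr hrρ))
  | succ n ih =>
    intro ρ r hρ hρ2 hr hrρ hguard y hy
    by_cases hcase : ρ ^ (1/θ₀) ≤ r
    · -- direct case
      have hdir : ρ ≤ r ^ θ₀ := by
        have := Real.rpow_le_rpow (Real.rpow_nonneg hρ.le _) hcase hθ₀.le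
        rwa [← Real.rpow_mul hρ.le, one_div_mul_cancel (ne_of_gt hθ₀), Real.rpow_one] at this
      exact ((chain_direct hθ₀ hs hC H hρ hr (by linarith) hdir y hy).mono_c
        (hfits (n+1) ρ r hρ hρ2 hr hrρ))
    · -- recursive case
      push_neg at hcase
      set a := 1/θ₀ with hadef
      set ρ' := 2 * ρ ^ a with hρ'def
      have hρa : (0:ℝ) < ρ ^ a := Real.rpow_pos_of_pos hρ _
      have e3 : ρ ^ (3:ℝ) = ρ*ρ*ρ := by
        rw [show (3:ℝ) = ((3:ℕ):ℝ) by norm_num, Real.rpow_natCast]; ring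
      have e2 : ρ ^ (2:ℝ) = ρ*ρ := by
        rw [show (2:ℝ) = ((2:ℕ):ℝ) by norm_num, Real.rpow_natCast]; ring
      have hρa3 : ρ ^ a ≤ ρ ^ (3:ℝ) :=
        Real.rpow_le_rpow_of_exponent_ge hρ (by linarith) ha3
      have hρ'2 : ρ' ≤ ρ ^ (2:ℝ) := by
        rw [hρ'def, e2]
        calc 2 * ρ ^ a ≤ 2 * ρ ^ (3:ℝ) := by linarith
          _ = (2*ρ) * (ρ*ρ) := by rw [e3]; ring
          _ ≤ 1 * (ρ*ρ) := by
              apply mul_le_mul_of_nonneg_right (by linarith) (by positivity)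
          _ = ρ*ρ := one_mul _
      have hρ'pos : (0:ℝ) < ρ' := by positivity
      have hρ'half : ρ' ≤ 1/2 := by
        rw [e2] at hρ'2; nlinarith
      have hrρ' : r ≤ ρ' := by
        rw [hρ'def]; nlinarith
      have hguard' : ρ' ^ ((2:ℝ)^n) ≤ r := by
        have hE : (0:ℝ) ≤ (2:ℝ)^n := by positivity
        calc ρ' ^ ((2:ℝ)^n) ≤ (ρ ^ (2:ℝ)) ^ ((2:ℝ)^n) :=
              Real.rpow_le_rpow hρ'pos.le hρ'2 hE
          _ = ρ ^ ((2:ℝ) * (2:ℝ)^n) := (Real.rpow_mul hρ.le _ _).symm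
          _ = ρ ^ ((2:ℝ)^(n+1)) := by rw [pow_succ]; ring_nf
          _ ≤ r := hguard
      -- apply H at radius ρ and recenter
      have hHρ := H ρ hρ (by linarith) y hy
      obtain ⟨t, htE, hcov, hcard⟩ := hHρ.recenter
      have hc₂ : (0:ℝ) ≤ ((2:ℝ)^s*C)^(n+1) * (ρ'/r)^s * (1/r)^s := by positivity
      have hpieces : ∀ z ∈ t, Cov r (((2:ℝ)^s*C)^(n+1) * (ρ'/r)^s * (1/r)^s)
          (closedBall z ρ' ∩ F) := by
        intro z hz
        have hzF : z ∈ F := (htE hz).2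
        exact ih ρ' r hρ'pos hρ'half hr hrρ' hguard' z hzF
      have hcomb := cov_of_pieces hc₂ t hcov hcard hpieces
      have heq : (C * (ρ / ρ ^ a) ^ s) * (((2:ℝ)^s*C)^(n+1) * (ρ'/r)^s * (1/r)^s)
          = ((2:ℝ)^s*C)^(n+1+1) * (ρ/r)^s * (1/r)^s := by
        have hmul : (ρ / ρ ^ a) ^ s * (ρ'/r) ^ s = ((2:ℝ) * (ρ/r)) ^ s := by
          rw [← Real.mul_rpow (by positivity) (by positivity)]
          congr 1
          rw [hρ'def]; field_simp
        have h2rs : ((2:ℝ) * (ρ/r)) ^ s = (2:ℝ)^s * (ρ/r)^s :=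
          Real.mul_rpow (by norm_num) (by positivity)
        calc (C * (ρ / ρ ^ a) ^ s) * (((2:ℝ)^s*C)^(n+1) * (ρ'/r)^s * (1/r)^s)
            = (((2:ℝ)^s*C)^(n+1) * (C * ((ρ / ρ ^ a) ^ s * (ρ'/r)^s))) * (1/r)^s := by ring
          _ = (((2:ℝ)^s*C)^(n+1) * (C * ((2:ℝ)^s * (ρ/r)^s))) * (1/r)^s := by
              rw [hmul, h2rs]
          _ = ((2:ℝ)^s*C)^(n+1+1) * (ρ/r)^s * (1/r)^s := by
              rw [pow_succ]; ring
      have hfin := hcomb.mono_c (le_of_eq heq)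
      exact hfin.mono_set (fun p hp => ⟨hp, hp.2⟩)

end Chain

/-! ### Spectrum sets -/

def USet (θ : ℝ) (F : Set X) : Set ℝ :=
  {s : ℝ | 0 ≤ s ∧ ∃ C > (0 : ℝ), ∀ r R : ℝ, 0 < r → r ≤ R ^ (1 / θ) →
    R ^ (1 / θ) < R → R < 1 → 0 < R → ∀ x ∈ F,
    (coveringNumber r (closedBall x R ∩ F) : ℝ≥0∞) ≤ ENNReal.ofReal (C * (R / r) ^ s)}

def ASet (θ : ℝ) (F : Set X) : Set ℝ :=
  {s : ℝ | 0 ≤ s ∧ ∃ C > (0 : ℝ), ∀ R : ℝ, 0 < R → R < 1 → ∀ x ∈ F,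
    (coveringNumber (R ^ (1 / θ)) (closedBall x R ∩ F) : ℝ≥0∞)
      ≤ ENNReal.ofReal (C * (R / R ^ (1 / θ)) ^ s)}

lemma bddBelow_USet (θ : ℝ) (F : Set X) : BddBelow (USet θ F) := ⟨0, fun _ hs => hs.1⟩
lemma bddBelow_ASet (θ : ℝ) (F : Set X) : BddBelow (ASet θ F) := ⟨0, fun _ hs => hs.1⟩

lemma USet_subset_ASet {θ : ℝ} (hθ0 : 0 < θ) (hθ1 : θ < 1) (F : Set X) :
    USet θ F ⊆ ASet θ F := by
  rintro s ⟨hs0, C, hC, h⟩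
  refine ⟨hs0, C, hC, ?_⟩
  intro R hR0 hR1 x hx
  have h1θ : 1 < 1/θ := by rw [lt_div_iff₀ hθ0]; linarith
  exact h (R ^ (1/θ)) R (Real.rpow_pos_of_pos hR0 _) le_rfl
    (by calc R ^ (1/θ) < R ^ (1:ℝ) := Real.rpow_lt_rpow_of_exponent_gt hR0 hR1 h1θ
          _ = R := Real.rpow_one R)
    hR1 hR0 x hx

lemma USet_mono {θ θ' : ℝ} (hθ0 : 0 < θ) (hθθ' : θ ≤ θ') (hθ'1 : θ' < 1) (F : Set X) :
    USet θ' F ⊆ USet θ F := by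
  rintro s ⟨hs0, C, hC, h⟩
  refine ⟨hs0, C, hC, ?_⟩
  intro r R hr hrθ hRθ hR1 hR0 x hx
  have hθ'0 : 0 < θ' := lt_of_lt_of_le hθ0 hθθ'
  have hrθ' : r ≤ R ^ (1/θ') := by
    refine hrθ.trans (Real.rpow_le_rpow_of_exponent_ge hR0 hR1.le ?_)
    exact one_div_le_one_div_of_le hθ0 hθθ'
  have h1θ' : 1 < 1/θ' := by rw [lt_div_iff₀ hθ'0]; linarith
  have hRθ' : R ^ (1/θ') < R := by
    calc R ^ (1/θ') < R ^ (1:ℝ) := Real.rpow_lt_rpow_of_exponent_gt hR0 hR1 h1θ'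
      _ = R := Real.rpow_one R
  exact h r R hr hrθ' hRθ' hR1 hR0 x hx

section EuclidSpectra

variable {d : ℕ}
local notation "Y" => EuclideanSpace ℝ (Fin d)

lemma d_mem_USet (F : Set Y) {θ : ℝ} (hθ0 : 0 < θ) : ((d:ℝ)) ∈ USet θ F := by
  refine ⟨Nat.cast_nonneg d, (3:ℝ)^d, by positivity, ?_⟩
  intro r R hr hrθ hRθ hR1 hR0 x hx
  have hrR : r ≤ R := (lt_of_le_of_lt hrθ hRθ).le
  have hcov := euclid_cov hr hrR (closedBall x R ∩ F) Set.inter_subset_left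
  refine le_trans hcov.coveringNumber_le (ENNReal.ofReal_le_ofReal (le_of_eq ?_))
  rw [Real.rpow_natCast, mul_div_assoc, mul_pow]

lemma d_mem_ASet (F : Set Y) {θ : ℝ} (hθ0 : 0 < θ) (hθ1 : θ < 1) : ((d:ℝ)) ∈ ASet θ F := by
  refine ⟨Nat.cast_nonneg d, (3:ℝ)^d, by positivity, ?_⟩
  intro R hR0 hR1 x hx
  have h1θ : (1:ℝ) ≤ 1/θ := by rw [le_div_iff₀ hθ0]; linarith
  have hr : 0 < R ^ (1/θ) := Real.rpow_pos_of_pos hR0 _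
  have hrR : R ^ (1/θ) ≤ R := by
    calc R ^ (1/θ) ≤ R ^ (1:ℝ) := Real.rpow_le_rpow_of_exponent_ge hR0 hR1.le h1θ
      _ = R := Real.rpow_one R
  have hcov := euclid_cov hr hrR (closedBall x R ∩ F) Set.inter_subset_left
  refine le_trans hcov.coveringNumber_le (ENNReal.ofReal_le_ofReal (le_of_eq ?_))
  rw [Real.rpow_natCast, mul_div_assoc, mul_pow]

lemma upperSpectrum_eq_sInf (θ : ℝ) (F : Set Y) : upperSpectrum θ F = sInf (USet θ F) := rfl
lemma assouadSpectrum_eq_sInf (θ : ℝ) (F : Set Y) : assouadSpectrum θ F = sInf (ASet θ F) := rfl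

lemma upperSpectrum_nonneg (F : Set Y) {θ : ℝ} (hθ0 : 0 < θ) :
    0 ≤ upperSpectrum θ F :=
  le_csInf ⟨(d:ℝ), d_mem_USet F hθ0⟩ (fun _ hs => hs.1)

lemma upperSpectrum_le_d (F : Set Y) {θ : ℝ} (hθ0 : 0 < θ) :
    upperSpectrum θ F ≤ (d:ℝ) :=
  csInf_le (bddBelow_USet θ F) (d_mem_USet F hθ0)

lemma assouadSpectrum_nonneg (F : Set Y) {θ : ℝ} (hθ0 : 0 < θ) (hθ1 : θ < 1) :
    0 ≤ assouadSpectrum θ F :=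
  le_csInf ⟨(d:ℝ), d_mem_ASet F hθ0 hθ1⟩ (fun _ hs => hs.1)

lemma assouadSpectrum_le_d (F : Set Y) {θ : ℝ} (hθ0 : 0 < θ) (hθ1 : θ < 1) :
    assouadSpectrum θ F ≤ (d:ℝ) :=
  csInf_le (bddBelow_ASet θ F) (d_mem_ASet F hθ0 hθ1)

lemma assouadSpectrum_le_upperSpectrum (F : Set Y) {θ : ℝ} (hθ0 : 0 < θ) (hθ1 : θ < 1) :
    assouadSpectrum θ F ≤ upperSpectrum θ F :=
  csInf_le_csInf (bddBelow_ASet θ F) ⟨(d:ℝ), d_mem_USet F hθ0⟩ (USet_subset_ASet hθ0 hθ1 F)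

lemma upperSpectrum_mono (F : Set Y) {θ θ' : ℝ} (hθ0 : 0 < θ) (hθθ' : θ ≤ θ') (hθ'1 : θ' < 1) :
    upperSpectrum θ F ≤ upperSpectrum θ' F :=
  csInf_le_csInf (bddBelow_USet θ F) ⟨(d:ℝ), d_mem_USet F (lt_of_lt_of_le hθ0 hθθ')⟩
    (USet_mono hθ0 hθθ' hθ'1 F)

end EuclidSpectra

-- numeric lemmas, standalone test
lemma K_pow_ceil_le {K η : ℝ} (hK : 1 ≤ K) (hη : 0 < η) :
    ∃ B : ℝ, 1 ≤ B ∧ ∀ w : ℝ, 2 ≤ w →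
      K ^ (⌈Real.logb 2 w⌉₊ + 1) ≤ B * Real.exp (η * w) := by
  have hlog2 : (0:ℝ) < Real.log 2 := Real.log_pos one_lt_two
  have hK0 : (0:ℝ) < K := lt_of_lt_of_le one_pos hK
  have hlogK : 0 ≤ Real.log K := Real.log_nonneg hK
  set α : ℝ := Real.log K / Real.log 2 with hα
  have hα0 : 0 ≤ α := div_nonneg hlogK hlog2.le
  set δ : ℝ := η / (α + 1) with hδ
  have hδ0 : 0 < δ := div_pos hη (by linarith)
  refine ⟨max 1 (Real.exp (α * (-1 - Real.log δ) + 2 * Real.log K)), le_max_left _ _, ?_⟩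
  intro w hw
  set n : ℕ := ⌈Real.logb 2 w⌉₊ with hn
  have hw0 : (0:ℝ) < w := by linarith
  have hlogb0 : 0 ≤ Real.logb 2 w := Real.logb_nonneg one_lt_two (by linarith)
  have hceil : (n:ℝ) < Real.logb 2 w + 1 := Nat.ceil_lt_add_one hlogb0
  have h1 : K ^ (n+1) = Real.exp (((n:ℝ)+1) * Real.log K) := by
    rw [show (((n:ℝ))+1) * Real.log K = Real.log (K^(n+1)) by
      rw [Real.log_pow]; push_cast; ring, Real.exp_log (by positivity)]
  have h2 : ((n:ℝ)+1) * Real.log K ≤ (Real.logb 2 w + 2) * Real.log K := by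
    apply mul_le_mul_of_nonneg_right _ hlogK
    linarith
  have h3 : (Real.logb 2 w + 2) * Real.log K = α * Real.log w + 2 * Real.log K := by
    rw [Real.logb, hα]; field_simp
  have hlogw : Real.log w ≤ δ * w - 1 - Real.log δ := by
    have h4 : Real.log (δ * w) ≤ δ * w - 1 := Real.log_le_sub_one_of_pos (by positivity)
    rw [Real.log_mul (ne_of_gt hδ0) (ne_of_gt hw0)] at h4
    linarith
  have h5 : α * Real.log w ≤ α * δ * w + α * (-1 - Real.log δ) := by
    have := mul_le_mul_of_nonneg_left hlogw hα0
    nlinarith [this]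
  have h6 : α * δ ≤ η := by
    rw [hδ]
    calc α * (η / (α+1)) = η * (α/(α+1)) := by ring
      _ ≤ η * 1 := by
          apply mul_le_mul_of_nonneg_left _ hη.le
          rw [div_le_one (by linarith)]; linarith
      _ = η := mul_one η
  calc K ^ (n+1) = Real.exp (((n:ℝ)+1) * Real.log K) := h1
    _ ≤ Real.exp ((Real.logb 2 w + 2) * Real.log K) := Real.exp_le_exp.2 h2
    _ = Real.exp (α * Real.log w + 2 * Real.log K) := by rw [h3]
    _ ≤ Real.exp (α * δ * w + (α * (-1 - Real.log δ) + 2 * Real.log K)) := by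
        apply Real.exp_le_exp.2; linarith
    _ ≤ Real.exp (η * w + (α * (-1 - Real.log δ) + 2 * Real.log K)) := by
        apply Real.exp_le_exp.2
        have : α * δ * w ≤ η * w := mul_le_mul_of_nonneg_right h6 (by linarith)
        linarith
    _ = Real.exp (α * (-1 - Real.log δ) + 2 * Real.log K) * Real.exp (η * w) := by
        rw [← Real.exp_add]; ring_nf
    _ ≤ (max 1 (Real.exp (α * (-1 - Real.log δ) + 2 * Real.log K))) * Real.exp (η * w) := by
        apply mul_le_mul_of_nonneg_right (le_max_right _ _) (Real.exp_nonneg _)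

lemma logb_one_div_ge {r : ℝ} (hr : 0 < r) (hr4 : r < 1/4) :
    2 ≤ Real.logb 2 (1/r) := by
  rw [Real.le_logb_iff_rpow_le one_lt_two (by positivity)]
  have h4 : (2:ℝ) ^ (2:ℝ) = 4 := by
    rw [show (2:ℝ) = ((2:ℕ):ℝ) from by norm_num, Real.rpow_natCast]; norm_num
  rw [h4, le_div_iff₀ hr]; linarith

lemma half_rpow_guard {r : ℝ} (hr : 0 < r) (hr4 : r < 1/4) :
    ((1:ℝ)/2) ^ ((2:ℝ)^(⌈Real.logb 2 (Real.logb 2 (1/r))⌉₊ : ℕ)) ≤ r := by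
  set w : ℝ := Real.logb 2 (1/r) with hwdef
  have hw2 : 2 ≤ w := logb_one_div_ge hr hr4
  have hw0 : (0:ℝ) < w := by linarith
  set n : ℕ := ⌈Real.logb 2 w⌉₊ with hn
  set E : ℝ := (2:ℝ)^(n:ℕ) with hE
  have hwE : w ≤ E := by
    calc w = (2:ℝ) ^ Real.logb 2 w := (Real.rpow_logb two_pos (by norm_num) hw0).symm
      _ ≤ (2:ℝ) ^ ((n:ℕ):ℝ) := Real.rpow_le_rpow_of_exponent_le one_le_two (Nat.le_ceil _)
      _ = E := by rw [hE, Real.rpow_natCast]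
  have h1r : 1/r = (2:ℝ) ^ w := (Real.rpow_logb two_pos (by norm_num) (by positivity)).symm
  have h2 : (2:ℝ)^w ≤ (2:ℝ)^E := Real.rpow_le_rpow_of_exponent_le one_le_two hwE
  have h3 : ((1:ℝ)/2) ^ E = ((2:ℝ)^E)⁻¹ := by
    rw [one_div, ← Real.inv_rpow (by norm_num : (0:ℝ) ≤ 2)]
  rw [h3]
  calc ((2:ℝ)^E)⁻¹ ≤ ((2:ℝ)^w)⁻¹ := by
        apply inv_anti₀ (Real.rpow_pos_of_pos two_pos w) h2
    _ = r := by rw [← h1r, one_div, inv_inv]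


lemma rpow_trade {θ ε r R : ℝ} (hθ0 : 0 < θ) (hε : 0 ≤ ε) (hr : 0 < r)
    (hR0 : 0 < R) (hrR : r ≤ R ^ (1/θ)) : (1/r) ^ (ε*(1-θ)) ≤ (R/r) ^ ε := by
  have hrθ : r ^ θ ≤ R := by
    have := Real.rpow_le_rpow hr.le hrR hθ0.le
    rwa [← Real.rpow_mul (by positivity : (0:ℝ) ≤ R), one_div_mul_cancel (ne_of_gt hθ0),
      Real.rpow_one] at this
  have step1 : (1/r) ^ (1-θ) ≤ R/r := by
    have e1 : (1/r) ^ (1-θ) = r ^ θ / r := by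
      rw [one_div, ← Real.rpow_neg_one r, ← Real.rpow_mul hr.le,
        show (-1:ℝ) * (1-θ) = θ - 1 by ring, Real.rpow_sub hr, Real.rpow_one]
    rw [e1]
    gcongr
  calc (1/r) ^ (ε*(1-θ)) = ((1/r) ^ (1-θ)) ^ ε := by
        rw [← Real.rpow_mul (by positivity), mul_comm]
    _ ≤ (R/r) ^ ε := Real.rpow_le_rpow (by positivity) step1 hε

section Main

variable {d : ℕ}
local notation "Y" => EuclideanSpace ℝ (Fin d)

/-- The key lemma: if the generalized upper box dimension vanishes,
then every ε is in the upper-spectrum set. -/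
lemma eps_mem_USet (F : Set Y) (hGB : genUpperBoxDim F = 0) {θ : ℝ}
    (hθ0 : 0 < θ) (hθ1 : θ < 1) {ε : ℝ} (hε : 0 < ε) : ε ∈ USet θ F := by
  classical
  -- Step 1: extract a small witness on the Assouad spectrum at some θ₀ ∈ (0, 1/3)
  set ε₁ : ℝ := ε * (1-θ)/4 with hε₁def
  have hε₁ : 0 < ε₁ := by
    have : 0 < 1 - θ := by linarith
    positivity
  have hbdd : IsBoundedUnder (· ≤ ·) (𝓝[>] (0:ℝ)) (fun θ₀ => assouadSpectrum θ₀ F) := by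
    refine ⟨(d:ℝ), eventually_map.2 ?_⟩
    filter_upwards [Ioo_mem_nhdsGT_of_mem (show (0:ℝ) ∈ Ico (0:ℝ) 1 by constructor <;> norm_num)]
      with θ₀ hθ₀
    exact assouadSpectrum_le_d F hθ₀.1 hθ₀.2
  have hev : ∀ᶠ θ₀ in 𝓝[>] (0:ℝ), assouadSpectrum θ₀ F < ε₁ := by
    apply eventually_lt_of_limsup_lt _ hbdd
    rw [← genUpperBoxDim]; rw [hGB]; exact hε₁
  have hex : ∃ θ₀ : ℝ, θ₀ ∈ Ioo (0:ℝ) (1/3) ∧ assouadSpectrum θ₀ F < ε₁ := by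
    have := (Ioo_mem_nhdsGT_of_mem (show (0:ℝ) ∈ Ico (0:ℝ) (1/3) by constructor <;> norm_num))
    exact ((hev.and this).exists.imp (fun θ₀ h => ⟨h.2, h.1⟩))
  obtain ⟨θ₀, hθ₀mem, hθ₀lt⟩ := hex
  have hθ₀0 : 0 < θ₀ := hθ₀mem.1
  have hθ₀3 : θ₀ ≤ 1/3 := hθ₀mem.2.le
  have hθ₀1 : θ₀ < 1 := by linarith
  -- extract s and C
  rw [assouadSpectrum_eq_sInf] at hθ₀lt
  obtain ⟨s, hsmem, hslt⟩ := exists_lt_of_csInf_lt ⟨(d:ℝ), d_mem_ASet F hθ₀0 hθ₀1⟩ hθ₀lt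
  obtain ⟨hs0, C, hC0, hH⟩ := hsmem
  set C' : ℝ := max C 1 with hC'def
  have hC' : 1 ≤ C' := le_max_right _ _
  -- H in Cov form
  have H : ∀ ρ : ℝ, 0 < ρ → ρ < 1 → ∀ y ∈ F,
      Cov (ρ ^ (1/θ₀)) (C' * (ρ / ρ ^ (1/θ₀)) ^ s) (closedBall y ρ ∩ F) := by
    intro ρ hρ hρ1 y hy
    apply cov_of_coveringNumber_le (by positivity)
    refine le_trans (hH ρ hρ hρ1 y hy) (ENNReal.ofReal_le_ofReal ?_)
    apply mul_le_mul_of_nonneg_right (le_max_left _ _) (Real.rpow_nonneg (by positivity) s)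
  -- constants
  set K : ℝ := (2:ℝ)^s * C' with hKdef
  have h2s : (1:ℝ) ≤ (2:ℝ)^s := one_le_rpow' one_le_two hs0
  have hK1 : 1 ≤ K := le_trans (by norm_num)
    (mul_le_mul h2s hC' zero_le_one (by linarith))
  set η : ℝ := ε*(1-θ)*Real.log 2/2 with hηdef
  have hlog2 : (0:ℝ) < Real.log 2 := Real.log_pos one_lt_two
  have hη : 0 < η := by
    have h1θ : 0 < 1 - θ := by linarith
    positivity
  obtain ⟨B, hB1, hBle⟩ := K_pow_ceil_le hK1 hη
  refine ⟨hε.le, 12^d * B, by positivity, ?_⟩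
  intro r R hr hrθ hRθ hR1 hR0 x hx
  have hrR : r < R := lt_of_le_of_lt hrθ hRθ
  by_cases hr4 : 1/4 ≤ r
  · -- large r: the Euclidean bound suffices
    have hcov := euclid_cov hr hrR.le (closedBall x R ∩ F) Set.inter_subset_left
    refine le_trans hcov.coveringNumber_le (ENNReal.ofReal_le_ofReal ?_)
    have h312 : (3*R/r)^d ≤ (12:ℝ)^d := by
      apply pow_le_pow_left₀ (by positivity)
      rw [div_le_iff₀ hr]; nlinarith
    have h1Rr : (1:ℝ) ≤ (R/r)^ε := one_le_rpow' ((one_le_div hr).2 hrR.le) hε.le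
    calc (3*R/r)^d ≤ (12:ℝ)^d := h312
      _ ≤ (12:ℝ)^d * B := le_mul_of_one_le_right (by positivity) hB1
      _ ≤ 12^d * B * (R/r)^ε := le_mul_of_one_le_right (by positivity) h1Rr
  · -- small r: chaining
    push_neg at hr4
    -- Step A: reduce to F-centred balls of radius 1/2
    have hbase : ∃ t₁ : Finset Y, (↑t₁ : Set Y) ⊆ F ∧
        (closedBall x R ∩ F ⊆ ⋃ z ∈ t₁, closedBall z (2 * (1/4))) ∧
        (t₁.card : ℝ) ≤ 12^d := by
      by_cases hR4 : R ≤ 1/4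
      · refine ⟨{x}, by simpa using hx, ?_, ?_⟩
        · intro p hp
          simp only [Finset.mem_singleton, Set.mem_iUnion, exists_prop]
          refine ⟨x, rfl, ?_⟩
          have := mem_closedBall.1 hp.1
          exact mem_closedBall.2 (by linarith)
        · simp only [Finset.card_singleton, Nat.cast_one]
          exact one_le_pow₀ (by norm_num)
      · push_neg at hR4
        have hcov := euclid_cov (by norm_num : (0:ℝ) < 1/4) hR4.le
          (closedBall x R ∩ F) Set.inter_subset_left
        obtain ⟨t₁, ht₁E, ht₁cov, ht₁card⟩ := hcov.recenter
        refine ⟨t₁, ht₁E.trans Set.inter_subset_right, ht₁cov, ht₁card.trans ?_⟩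
        calc (3*R/(1/4))^d ≤ (12:ℝ)^d := by
              apply pow_le_pow_left₀ (by positivity)
              rw [div_le_iff₀ (by norm_num : (0:ℝ) < 1/4)]; nlinarith
          _ = 12^d := rfl
    obtain ⟨t₁, ht₁F, ht₁cov, ht₁card⟩ := hbase
    -- Step B: chain each piece down to scale r
    set w : ℝ := Real.logb 2 (1/r) with hwdef
    have hw2 : 2 ≤ w := logb_one_div_ge hr hr4
    set n : ℕ := ⌈Real.logb 2 w⌉₊ with hndef
    have hguard : ((1:ℝ)/2) ^ ((2:ℝ)^(n:ℕ)) ≤ r := half_rpow_guard hr hr4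
    have hc₂ : (0:ℝ) ≤ K^(n+1) * ((1/2)/r)^s * (1/r)^s := by positivity
    have hpieces : ∀ z ∈ t₁, Cov r (K^(n+1) * (((1:ℝ)/2)/r)^s * (1/r)^s)
        (closedBall z (2 * (1/4)) ∩ F) := by
      intro z hz
      have h24 : (2:ℝ) * (1/4) = 1/2 := by norm_num
      rw [h24]
      exact chain hθ₀0 hθ₀3 hs0 hC' H n (1/2) r (by norm_num) le_rfl hr
        (by linarith) hguard z (ht₁F hz)
    have hcomb := cov_of_pieces hc₂ t₁ ht₁cov ht₁card hpieces
    have hcomb' : Cov r (12^d * (K^(n+1) * (((1:ℝ)/2)/r)^s * (1/r)^s))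
        (closedBall x R ∩ F) :=
      hcomb.mono_set (fun p hp => ⟨hp, hp.2⟩)
    refine le_trans hcomb'.coveringNumber_le (ENNReal.ofReal_le_ofReal ?_)
    -- Step C: the numeric estimate
    have h1r1 : (1:ℝ) ≤ 1/r := by rw [le_div_iff₀ hr]; linarith
    have hKn : K^(n+1) ≤ B * Real.exp (η * w) := hBle w hw2
    have hhalf : (((1:ℝ)/2)/r)^s ≤ (1/r)^s :=
      Real.rpow_le_rpow (by positivity) (by rw [div_le_div_iff₀ hr hr]; nlinarith) hs0
    have hexp : Real.exp (η * w) = (1/r) ^ (ε*(1-θ)/2) := by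
      rw [Real.rpow_def_of_pos (by positivity)]
      congr 1
      have hlog1r : Real.log (1/r) = w * Real.log 2 := by
        rw [hwdef, Real.logb]
        field_simp
      rw [hlog1r, hηdef]; ring
    have hss : (1/r)^s * (1/r)^s ≤ (1/r) ^ (ε*(1-θ)/2) := by
      rw [← Real.rpow_add (by positivity)]
      apply Real.rpow_le_rpow_of_exponent_le h1r1
      rw [hε₁def] at hslt
      linarith
    have htrade : (1/r) ^ (ε*(1-θ)/2) * (1/r) ^ (ε*(1-θ)/2) ≤ (R/r)^ε := by
      rw [← Real.rpow_add (by positivity), show ε*(1-θ)/2 + ε*(1-θ)/2 = ε*(1-θ) by ring]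
      exact rpow_trade hθ0 hε.le hr hR0 hrθ
    calc 12^d * (K^(n+1) * (((1:ℝ)/2)/r)^s * (1/r)^s)
        ≤ 12^d * ((B * Real.exp (η * w)) * ((1/r)^s * (1/r)^s)) := by
          apply mul_le_mul_of_nonneg_left _ (by positivity)
          calc K^(n+1) * (((1:ℝ)/2)/r)^s * (1/r)^s
              ≤ (B * Real.exp (η * w)) * (((1:ℝ)/2)/r)^s * (1/r)^s := by
                apply mul_le_mul_of_nonneg_right _ (by positivity)
                exact mul_le_mul_of_nonneg_right hKn (by positivity)
            _ ≤ (B * Real.exp (η * w)) * (1/r)^s * (1/r)^s := by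
                apply mul_le_mul_of_nonneg_right _ (by positivity)
                exact mul_le_mul_of_nonneg_left hhalf (by positivity)
            _ = (B * Real.exp (η * w)) * ((1/r)^s * (1/r)^s) := by ring
      _ ≤ 12^d * ((B * Real.exp (η * w)) * (1/r) ^ (ε*(1-θ)/2)) := by
          apply mul_le_mul_of_nonneg_left _ (by positivity)
          exact mul_le_mul_of_nonneg_left hss (by positivity)
      _ = 12^d * B * ((1/r) ^ (ε*(1-θ)/2) * (1/r) ^ (ε*(1-θ)/2)) := by
          rw [hexp]; ring
      _ ≤ 12^d * B * (R/r)^ε := by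
          apply mul_le_mul_of_nonneg_left htrade (by positivity)

end Main

section Final

variable {d : ℕ}
local notation "Y" => EuclideanSpace ℝ (Fin d)

lemma upperSpectrum_zero_of_GB (F : Set Y) (hGB : genUpperBoxDim F = 0) {θ : ℝ}
    (hθ0 : 0 < θ) (hθ1 : θ < 1) : upperSpectrum θ F = 0 := by
  refine le_antisymm ?_ (upperSpectrum_nonneg F hθ0)
  refine le_of_forall_pos_le_add (fun ε hε => ?_)
  rw [zero_add]
  exact csInf_le (bddBelow_USet θ F) (eps_mem_USet F hGB hθ0 hθ1 hε)

lemma upperSpectrum_zero_of_qA (F : Set Y) (hqA : quasiAssouadDim F = 0) {θ : ℝ}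
    (hθ0 : 0 < θ) (hθ1 : θ < 1) : upperSpectrum θ F = 0 := by
  refine le_antisymm ?_ (upperSpectrum_nonneg F hθ0)
  have hfreq : ∃ᶠ θ' in 𝓝[<] (1:ℝ), upperSpectrum θ F ≤ upperSpectrum θ' F := by
    apply Eventually.frequently
    filter_upwards [Ioo_mem_nhdsLT_of_mem (show (1:ℝ) ∈ Ioc θ 1 from ⟨hθ1, le_refl 1⟩)]
      with θ' hθ'
    exact upperSpectrum_mono F hθ0 hθ'.1.le hθ'.2
  have hbdd : IsBoundedUnder (· ≤ ·) (𝓝[<] (1:ℝ)) (fun θ' => upperSpectrum θ' F) := by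
    refine ⟨(d:ℝ), eventually_map.2 ?_⟩
    filter_upwards [Ioo_mem_nhdsLT_of_mem (show (1:ℝ) ∈ Ioc (0:ℝ) 1 by norm_num)]
      with θ' hθ'
    exact upperSpectrum_le_d F hθ'.1
  have := le_limsup_of_frequently_le hfreq hbdd
  rw [← quasiAssouadDim, hqA] at this
  exact this

theorem main_iff (F : Set Y) : genUpperBoxDim F = 0 ↔ quasiAssouadDim F = 0 := by
  constructor
  · intro hGB
    have h0 : ∀ᶠ θ in 𝓝[<] (1:ℝ), upperSpectrum θ F = (0:ℝ) := by
      filter_upwards [Ioo_mem_nhdsLT_of_mem (show (1:ℝ) ∈ Ioc (0:ℝ) 1 by norm_num)]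
        with θ hθ
      exact upperSpectrum_zero_of_GB F hGB hθ.1 hθ.2
    calc quasiAssouadDim F = limsup (fun _ : ℝ => (0:ℝ)) (𝓝[<] (1:ℝ)) := limsup_congr h0
      _ = 0 := limsup_const 0
  · intro hqA
    have h0 : ∀ᶠ θ in 𝓝[>] (0:ℝ), assouadSpectrum θ F = (0:ℝ) := by
      filter_upwards [Ioo_mem_nhdsGT_of_mem (show (0:ℝ) ∈ Ico (0:ℝ) 1 by norm_num)]
        with θ hθ
      refine le_antisymm ?_ (assouadSpectrum_nonneg F hθ.1 hθ.2)
      calc assouadSpectrum θ F ≤ upperSpectrum θ F :=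
            assouadSpectrum_le_upperSpectrum F hθ.1 hθ.2
        _ = 0 := upperSpectrum_zero_of_qA F hqA hθ.1 hθ.2
    calc genUpperBoxDim F = limsup (fun _ : ℝ => (0:ℝ)) (𝓝[>] (0:ℝ)) := limsup_congr h0
      _ = 0 := limsup_const 0

end Final


/-- `\overline{dim}_{GB} F = 0` if and only if `dim_{qA} F = 0`. -/
theorem genUpperBoxDim_eq_zero_iff_quasiAssouadDim_eq_zero
    (d : ℕ) (F : Set (EuclideanSpace ℝ (Fin d))) :
    genUpperBoxDim F = 0 ↔ quasiAssouadDim F = 0 := main_iff F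

end
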